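/- For every positive integer n, the polynomial T_n(z) = ∑_{r=0}^{n-1} c_n(r) z^r − n has degree exactly n − n/γ(n), where γ(n) is the square-free kernel of n; that is, c_n(r) = 0 for n − n/γ(n) < r ≤ n−1 and c_n(n − n/γ(n)) ≠ 0. -/

import Mathlib

open Polynomial Finset

/-- The Ramanujan sum `c_n(r) = ∑_{1 ≤ j ≤ n, gcd(j,n)=1} e^{2πijr/n}`. -/
noncomputable def ramanujanSum (n : ℕ) (r : ℤ) : ℂ :=
  ∑ j ∈ Finset.Icc 1 n, if Nat.gcd j n = 1 then
    Complex.exp (2 * (Real.pi : ℂ) * Complex.I * (j : ℂ) * (r : ℂ) / (n : ℂ)) else 0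


lemma geom_sum_exp (m : ℕ) (hm : 1 ≤ m) (r : ℤ) :
    ∑ k ∈ Finset.Icc 1 m,
      Complex.exp (2 * (Real.pi : ℂ) * Complex.I * (k : ℂ) * (r : ℂ) / (m : ℂ))
      = if (m : ℤ) ∣ r then (m : ℂ) else 0 := by
  have hm0 : (m : ℂ) ≠ 0 := Nat.cast_ne_zero.2 (by omega)
  have h2pi : (2 * (Real.pi : ℂ) * Complex.I) ≠ 0 := by
    simp [Real.pi_ne_zero, Complex.I_ne_zero, Complex.ofReal_ne_zero]
  set w : ℂ := Complex.exp (2 * (Real.pi : ℂ) * Complex.I * (r : ℂ) / (m : ℂ)) with hw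
  have hpow : ∀ k : ℕ,
      Complex.exp (2 * (Real.pi : ℂ) * Complex.I * (k : ℂ) * (r : ℂ) / (m : ℂ)) = w ^ k := by
    intro k
    rw [hw, ← Complex.exp_nat_mul]
    congr 1
    ring
  rw [Finset.sum_congr rfl fun k _ => hpow k]
  by_cases hdvd : (m : ℤ) ∣ r
  · obtain ⟨t, ht⟩ := hdvd
    have hw1 : w = 1 := by
      rw [hw, ht,
        show 2 * (Real.pi : ℂ) * Complex.I * (((m : ℤ) * t : ℤ) : ℂ) / (m : ℂ)
            = (t : ℂ) * (2 * (Real.pi : ℂ) * Complex.I) from by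
          push_cast; field_simp]
      exact Complex.exp_int_mul_two_pi_mul_I t
    rw [if_pos ⟨t, ht⟩]
    simp [hw1, Nat.card_Icc]
  · have hw1 : w ≠ 1 := by
      intro h
      rw [hw, Complex.exp_eq_one_iff] at h
      obtain ⟨t, ht⟩ := h
      apply hdvd
      refine ⟨t, ?_⟩
      have hrc : (r : ℂ) = (m : ℂ) * (t : ℂ) := by
        rw [div_eq_iff hm0] at ht
        have := mul_left_cancel₀ h2pi
          (show 2 * (Real.pi : ℂ) * Complex.I * (r : ℂ)
              = 2 * (Real.pi : ℂ) * Complex.I * ((m : ℂ) * (t : ℂ)) by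
            linear_combination ht)
        exact this
      exact_mod_cast hrc
    have hwm : w ^ m = 1 := by
      rw [hw, ← Complex.exp_nat_mul,
        show (m : ℂ) * (2 * (Real.pi : ℂ) * Complex.I * (r : ℂ) / (m : ℂ))
            = (r : ℂ) * (2 * (Real.pi : ℂ) * Complex.I) from by field_simp]
      exact Complex.exp_int_mul_two_pi_mul_I r
    rw [if_neg hdvd]
    have hsum : ∑ k ∈ Finset.Icc 1 m, w ^ k = w * ∑ k ∈ Finset.range m, w ^ k := by
      rw [Finset.mul_sum, ← Finset.Ico_add_one_right_eq_Icc, Finset.sum_Ico_eq_sum_range]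
      simp [pow_succ, pow_add, mul_comm]
    rw [hsum, geom_sum_eq hw1, hwm]
    simp

lemma ramanujanSum_eq_sum_divisors (n : ℕ) (hn : 1 ≤ n) (r : ℤ) :
    ramanujanSum n r = ∑ d ∈ n.divisors,
      (ArithmeticFunction.moebius d : ℂ) *
        (if ((n / d : ℕ) : ℤ) ∣ r then ((n / d : ℕ) : ℂ) else 0) := by
  have hn0 : n ≠ 0 := by omega
  set E : ℕ → ℂ := fun j =>
    Complex.exp (2 * (Real.pi : ℂ) * Complex.I * (j : ℂ) * (r : ℂ) / (n : ℂ)) with hE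
  have step1 : ramanujanSum n r
      = ∑ j ∈ Finset.Icc 1 n, ∑ d ∈ n.divisors,
          (if d ∣ j then (ArithmeticFunction.moebius d : ℂ) else 0) * E j := by
    unfold ramanujanSum
    refine Finset.sum_congr rfl fun j hj => ?_
    obtain ⟨hj1, hj2⟩ := Finset.mem_Icc.mp hj
    have hg0 : Nat.gcd j n ≠ 0 := Nat.gcd_ne_zero_left (by omega)
    have hfilter : n.divisors.filter (· ∣ j) = (Nat.gcd j n).divisors := by
      ext d
      simp only [Finset.mem_filter, Nat.mem_divisors, Nat.dvd_gcd_iff]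
      constructor
      · rintro ⟨⟨hdn, _⟩, hdj⟩; exact ⟨⟨hdj, hdn⟩, hg0⟩
      · rintro ⟨⟨hdj, hdn⟩, _⟩; exact ⟨⟨hdn, hn0⟩, hdj⟩
    have hmoeb : (∑ d ∈ (Nat.gcd j n).divisors, ArithmeticFunction.moebius d)
        = if Nat.gcd j n = 1 then 1 else 0 := by
      rw [← ArithmeticFunction.coe_mul_zeta_apply, ArithmeticFunction.moebius_mul_coe_zeta,
        ArithmeticFunction.one_apply]
    rw [← Finset.sum_mul, ← Finset.sum_filter, hfilter]
    have hcast : (∑ d ∈ (Nat.gcd j n).divisors, (ArithmeticFunction.moebius d : ℂ))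
        = ((∑ d ∈ (Nat.gcd j n).divisors, ArithmeticFunction.moebius d : ℤ) : ℂ) := by
      push_cast
      rfl
    rw [hcast, hmoeb]
    split_ifs <;> simp [hE]
  rw [step1, Finset.sum_comm]
  refine Finset.sum_congr rfl fun d hd => ?_
  obtain ⟨hdn, -⟩ := Nat.mem_divisors.mp hd
  have hd0 : d ≠ 0 := by rintro rfl; exact hn0 (Nat.eq_zero_of_zero_dvd hdn)
  have hnd0 : 1 ≤ n / d := Nat.div_pos (Nat.le_of_dvd (by omega) hdn) (by omega)
  have hmul : d * (n / d) = n := Nat.mul_div_cancel' hdn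
  calc ∑ j ∈ Finset.Icc 1 n, (if d ∣ j then (ArithmeticFunction.moebius d : ℂ) else 0) * E j
      = ∑ j ∈ (Finset.Icc 1 n).filter (d ∣ ·), (ArithmeticFunction.moebius d : ℂ) * E j := by
        rw [Finset.sum_filter]
        exact Finset.sum_congr rfl fun j _ => by split_ifs <;> simp
    _ = ∑ k ∈ Finset.Icc 1 (n / d), (ArithmeticFunction.moebius d : ℂ) * E (d * k) := by
        refine Finset.sum_bij' (fun j _ => j / d) (fun k _ => d * k) ?_ ?_ ?_ ?_ ?_
        · intro j hj
          simp only [Finset.mem_filter, Finset.mem_Icc] at hj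
          obtain ⟨⟨hj1, hj2⟩, hdj⟩ := hj
          simp only [Finset.mem_Icc]
          exact ⟨Nat.div_pos (Nat.le_of_dvd (by omega) hdj) (by omega),
            Nat.div_le_div_right hj2⟩
        · intro k hk
          simp only [Finset.mem_Icc] at hk
          simp only [Finset.mem_filter, Finset.mem_Icc]
          refine ⟨⟨Nat.mul_pos (by omega) hk.1, ?_⟩, Dvd.intro k rfl⟩
          calc d * k ≤ d * (n / d) := Nat.mul_le_mul_left d hk.2
            _ = n := hmul
        · intro j hj
          simp only [Finset.mem_filter] at hj
          exact Nat.mul_div_cancel' hj.2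
        · intro k hk
          exact Nat.mul_div_cancel_left k (by omega)
        · intro j hj
          simp only [Finset.mem_filter] at hj
          rw [Nat.mul_div_cancel' hj.2]
    _ = (ArithmeticFunction.moebius d : ℂ) *
          (if ((n / d : ℕ) : ℤ) ∣ r then ((n / d : ℕ) : ℂ) else 0) := by
        have hterm : ∀ k : ℕ, E (d * k) =
            Complex.exp (2 * (Real.pi : ℂ) * Complex.I * (k : ℂ) * (r : ℂ) / ((n / d : ℕ) : ℂ)) := by
          intro k
          rw [hE]
          have hndC : ((n / d : ℕ) : ℂ) ≠ 0 := Nat.cast_ne_zero.2 (by omega)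
          have hdC : ((d : ℕ) : ℂ) ≠ 0 := Nat.cast_ne_zero.2 hd0
          have hnC : ((n : ℕ) : ℂ) = (d : ℂ) * ((n / d : ℕ) : ℂ) := by
            exact_mod_cast congrArg (Nat.cast : ℕ → ℂ) hmul.symm
          simp only []
          congr 1
          push_cast
          rw [hnC]
          field_simp
        rw [← Finset.mul_sum]
        congr 1
        rw [Finset.sum_congr rfl fun k _ => hterm k]
        exact geom_sum_exp (n / d) hnd0 r

lemma squarefree_prod_primes {s : Finset ℕ} (hs : ∀ p ∈ s, p.Prime) :
    Squarefree (∏ p ∈ s, p) := by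
  induction s using Finset.induction with
  | empty => simp
  | @insert a s ha ih =>
    rw [Finset.prod_insert ha, Nat.squarefree_mul_iff]
    refine ⟨?_, (hs a (Finset.mem_insert_self a s)).squarefree,
      ih fun p hp => hs p (Finset.mem_insert_of_mem hp)⟩
    refine Nat.Coprime.prod_right fun p hp => ?_
    exact (Nat.coprime_primes (hs a (Finset.mem_insert_self a s))
      (hs p (Finset.mem_insert_of_mem hp))).mpr (by rintro rfl; exact ha hp)

theorem toth_poly_degree (n : ℕ) (hn : 1 ≤ n) :
    (∀ r : ℕ, n - n / (∏ p ∈ n.primeFactors, p) < r → r ≤ n - 1 →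
        ramanujanSum n r = 0) ∧
      ramanujanSum n ((n : ℤ) - (n / (∏ p ∈ n.primeFactors, p) : ℕ)) ≠ 0 := by
  have hn0 : n ≠ 0 := by omega
  set γ : ℕ := ∏ p ∈ n.primeFactors, p with hγ
  have hγdvd : γ ∣ n := Nat.prod_primeFactors_dvd n
  have hγ0 : γ ≠ 0 := fun h => hn0 (Nat.eq_zero_of_zero_dvd (h ▸ hγdvd))
  have hγsq : Squarefree γ := squarefree_prod_primes fun p hp => Nat.prime_of_mem_primeFactors hp
  set m : ℕ := n / γ with hm
  have hmdvd : m ∣ n := Nat.div_dvd_of_dvd hγdvd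
  have hm1 : 1 ≤ m := Nat.div_pos (Nat.le_of_dvd (by omega) hγdvd) (by omega)
  have hmn : m ≤ n := Nat.le_of_dvd (by omega) hmdvd
  -- for each squarefree divisor d of n, m divides n / d
  have hkey : ∀ d, d ∣ n → Squarefree d → m ∣ n / d := by
    intro d hdn hdsq
    have hdγ : d ∣ γ := by
      rw [← Nat.prod_primeFactors_of_squarefree hdsq, hγ]
      exact Finset.prod_dvd_prod_of_subset _ _ _ (Nat.primeFactors_mono hdn hn0)
    obtain ⟨e, he⟩ := hdγ
    have hd0 : d ≠ 0 := fun h => hγ0 (by simp [he, h])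
    have hnn : n = d * (e * m) := by
      rw [← mul_assoc, ← he, hm, Nat.mul_div_cancel' hγdvd]
    refine ⟨e, ?_⟩
    rw [hnn, Nat.mul_div_cancel_left _ (by omega), mul_comm]
  constructor
  · intro r hr1 hr2
    rw [ramanujanSum_eq_sum_divisors n hn]
    refine Finset.sum_eq_zero fun d hd => ?_
    obtain ⟨hdn, -⟩ := Nat.mem_divisors.mp hd
    by_cases hμ : ArithmeticFunction.moebius d = 0
    · simp [hμ]
    · have hdsq : Squarefree d := ArithmeticFunction.moebius_ne_zero_iff_squarefree.mp hμ
      have hmd : m ∣ n / d := hkey d hdn hdsq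
      have hnd1 : 1 ≤ n / d :=
        Nat.div_pos (Nat.le_of_dvd (by omega) hdn) (Nat.pos_of_ne_zero hdsq.ne_zero)
      have hcond : ¬ ((n / d : ℕ) : ℤ) ∣ (r : ℤ) := by
        rw [Int.natCast_dvd_natCast]
        intro hdvd
        have h1 : n / d ∣ n := Nat.div_dvd_of_dvd hdn
        have h2 : n / d ∣ n - r := Nat.dvd_sub h1 hdvd
        have h3 : m ≤ n / d := Nat.le_of_dvd (by omega) hmd
        have h4 : n / d ≤ n - r := Nat.le_of_dvd (by omega) h2
        omega
      rw [if_neg hcond, mul_zero]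
  · have hcast : ((n : ℤ) - (m : ℕ)) = ((n - m : ℕ) : ℤ) := by
      rw [Nat.cast_sub hmn]
    rw [hcast, ramanujanSum_eq_sum_divisors n hn]
    have hγmem : γ ∈ n.divisors := Nat.mem_divisors.mpr ⟨hγdvd, hn0⟩
    have hnγ : n / γ = m := rfl
    rw [Finset.sum_eq_single_of_mem γ hγmem ?side]
    · rw [hnγ, if_pos]
      · refine mul_ne_zero ?_ (Nat.cast_ne_zero.2 (by omega))
        rw [Int.cast_ne_zero]
        exact ArithmeticFunction.moebius_ne_zero_iff_squarefree.mpr hγsq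
      · rw [Int.natCast_dvd_natCast]
        exact Nat.dvd_sub hmdvd dvd_rfl
    case side =>
      intro d hd hne
      obtain ⟨hdn, -⟩ := Nat.mem_divisors.mp hd
      by_cases hμ : ArithmeticFunction.moebius d = 0
      · simp [hμ]
      · have hdsq : Squarefree d := ArithmeticFunction.moebius_ne_zero_iff_squarefree.mp hμ
        have hmd : m ∣ n / d := hkey d hdn hdsq
        have hcond : ¬ ((n / d : ℕ) : ℤ) ∣ ((n - m : ℕ) : ℤ) := by
          rw [Int.natCast_dvd_natCast]
          intro hdvd
          have h1 : n / d ∣ n := Nat.div_dvd_of_dvd hdn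
          have h2 : n / d ∣ m := by
            have := Nat.dvd_sub h1 hdvd
            rwa [Nat.sub_sub_self hmn] at this
          have heq : n / d = m := Nat.dvd_antisymm h2 hmd
          apply hne
          have : n / (n / d) = n / m := by rw [heq]
          rwa [Nat.div_div_self hdn hn0, hm, Nat.div_div_self hγdvd hn0] at this
        rw [if_neg hcond, mul_zero]
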